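/- Every real number α has at most one expression as an infinite continued fraction [c_1, c_2, c_3, …] with all c_i ∈ ℤ satisfying: |c_i| ≥ 2 for i > 1, and if c_i = ±2 for i > 1 then sgn(c_i) = sgn(c_{i+1}). -/

import Mathlib

open Filter Topology

/-- Finite continued fraction of a list of integers. -/
noncomputable def cfL : List ℤ → ℝ
  | [] => 0
  | [c] => (c : ℝ)
  | c :: l => (c : ℝ) + (cfL l)⁻¹

/-- Every real number has at most one expression as an infinite continued
fraction `[c 0, c 1, …]` with integer partial quotients satisfying
`|c i| ≥ 2` for `i ≥ 1` and the sign condition: if `c i = ±2` for `i ≥ 1`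
then `sgn (c i) = sgn (c (i+1))`. -/

lemma cfL_cons (a : ℤ) (l : List ℤ) (h : l ≠ []) :
    cfL (a :: l) = (a : ℝ) + (cfL l)⁻¹ := by
  cases l with
  | nil => exact absurd rfl h
  | cons b t => rfl

noncomputable def T (c : ℕ → ℤ) (k n : ℕ) : ℝ :=
  cfL (List.ofFn fun i : Fin (n+1) => c (k + i))

lemma T_zero (c : ℕ → ℤ) (k : ℕ) : T c k 0 = c k := by
  simp [T, cfL]

lemma T_succ (c : ℕ → ℤ) (k n : ℕ) : T c k (n+1) = c k + (T c (k+1) n)⁻¹ := by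
  have h1 : (List.ofFn fun i : Fin (n+1+1) => c (k + ↑i)) =
      c k :: (List.ofFn fun i : Fin (n+1) => c (k+1 + ↑i)) := by
    rw [List.ofFn_succ]
    refine congrArg₂ _ (by simp) (congrArg _ (funext fun i => ?_))
    congr 1
    simp [Fin.val_succ]
    omega
  rw [T, h1, cfL_cons _ _ (by simp), T]

lemma T_shift (c : ℕ → ℤ) (k n : ℕ) : T (fun i => c (i+1)) k n = T c (k+1) n := by
  unfold T
  exact congrArg cfL (congrArg _ (funext fun i => congrArg c (by omega)))

lemma T_bounds (c : ℕ → ℤ) (hc1 : ∀ i, 1 ≤ i → 2 ≤ |c i|)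
    (hc2 : ∀ i, 1 ≤ i → |c i| = 2 → (c i).sign = (c (i+1)).sign) :
    ∀ n k, 1 ≤ k → |T c k n - c k| ≤ 1/2 ∧ 2 ≤ |T c k n| := by
  intro n
  induction n with
  | zero =>
    intro k hk
    rw [T_zero]
    have := hc1 k hk
    constructor
    · simp
    · rw [← Int.cast_abs]
      exact_mod_cast this
  | succ n ih =>
    intro k hk
    obtain ⟨h1, h2⟩ := ih (k+1) (by omega)
    rw [T_succ]
    set t := T c (k+1) n with ht
    have htne : t ≠ 0 := by
      intro h; rw [h] at h2; norm_num at h2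
    have hinv : |t⁻¹| ≤ 1/2 := by
      rw [abs_inv]
      rw [inv_le_comm₀ (by linarith) (by norm_num)]
      linarith
    refine ⟨by simpa using hinv, ?_⟩
    have hck := hc1 k hk
    rcases lt_or_ge (|c k|) 3 with h3 | h3
    · -- |c k| = 2
      have hck2 : |c k| = 2 := le_antisymm (by omega) hck
      have hsign := hc2 k hk hck2
      have hnext := hc1 (k+1) (by omega)
      rcases abs_eq (by norm_num : (0:ℤ) ≤ 2) |>.mp hck2 with h | h
      · -- c k = 2, so c (k+1) ≥ 2, t > 0
        have hpos : 0 < c (k+1) := by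
          rw [h] at hsign
          exact Int.sign_eq_one_iff_pos.mp (hsign.symm.trans (by decide))
        have hnext' := le_abs.mp hnext
        have hnp : (2:ℝ) ≤ (c (k+1) : ℝ) := by exact_mod_cast by omega
        have htpos : (3:ℝ)/2 ≤ t := by
          have : |t - c (k+1)| ≤ 1/2 := h1
          have := abs_le.mp this
          linarith
        have : 0 < t⁻¹ := inv_pos.mpr (by linarith)
        rw [h, abs_of_pos (by push_cast; linarith)]
        push_cast
        linarith
      · -- c k = -2
        have hneg : c (k+1) < 0 := by
          rw [h] at hsign
          exact Int.sign_eq_neg_one_iff_neg.mp (hsign.symm.trans (by decide))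
        have hnext' := le_abs.mp hnext
        have hnp : (c (k+1) : ℝ) ≤ -2 := by
          have : c (k+1) ≤ -2 := by omega
          exact_mod_cast this
        have htneg : t ≤ -(3:ℝ)/2 := by
          have := abs_le.mp h1
          linarith
        have : t⁻¹ < 0 := inv_neg''.mpr (by linarith)
        rw [h, abs_of_neg (by push_cast; linarith)]
        push_cast
        linarith
    · -- |c k| ≥ 3
      have : (3:ℝ) ≤ |(c k : ℝ)| := by rw [← Int.cast_abs]; exact_mod_cast h3
      have := abs_le.mp hinv
      rcases abs_cases ((c k : ℝ)) with ⟨he, _⟩ | ⟨he, _⟩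
      · rw [abs_of_pos (by linarith)]; linarith
      · rw [abs_of_neg (by linarith)]; linarith

lemma tail_lemma (α : ℝ) (c : ℕ → ℤ)
    (hc1 : ∀ i, 1 ≤ i → 2 ≤ |c i|)
    (hc2 : ∀ i, 1 ≤ i → |c i| = 2 → (c i).sign = (c (i+1)).sign)
    (h : Tendsto (fun n => T c 0 n) atTop (𝓝 α)) :
    ∃ β : ℝ, Tendsto (fun n => T c 1 n) atTop (𝓝 β) ∧ α = c 0 + β⁻¹ ∧ 2 < |β| := by
  have hB := fun n => T_bounds c hc1 hc2 n 1 le_rfl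
  have h1 : Tendsto (fun n => T c 0 (n+1)) atTop (𝓝 α) :=
    (tendsto_add_atTop_iff_nat 1).mpr h
  simp only [T_succ] at h1
  have h2 : Tendsto (fun n => (T c 1 n)⁻¹) atTop (𝓝 (α - c 0)) := by
    have := h1.sub_const (c 0)
    simpa using this
  -- |T c 1 n| ≤ |c 1| + 1/2 and ≥ 2
  have habs : ∀ n, |T c 1 n| ≤ |(c 1 : ℝ)| + 1/2 := by
    intro n
    have := (hB n).1
    have h3 := abs_sub_abs_le_abs_sub (T c 1 n) (c 1 : ℝ)
    linarith
  have hc1' : (2:ℝ) ≤ |(c 1 : ℝ)| := by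
    rw [← Int.cast_abs]; exact_mod_cast hc1 1 le_rfl
  have hub : ∀ n, (|(c 1 : ℝ)| + 1/2)⁻¹ ≤ |(T c 1 n)⁻¹| := by
    intro n
    rw [abs_inv]
    have := (hB n).2
    apply inv_anti₀ (by linarith) (habs n)
  have hlb : (|(c 1 : ℝ)| + 1/2)⁻¹ ≤ |α - c 0| :=
    ge_of_tendsto h2.abs (Filter.Eventually.of_forall hub)
  have hne : α - (c 0 : ℝ) ≠ 0 := by
    intro hz
    rw [hz] at hlb
    simp at hlb
    have : (0:ℝ) < (|(c 1 : ℝ)| + 1/2)⁻¹ := by positivity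
    linarith
  have hβ : Tendsto (fun n => T c 1 n) atTop (𝓝 (α - c 0)⁻¹) := by
    have := h2.inv₀ hne
    simpa using this
  set β := (α - (c 0:ℝ))⁻¹ with hβdef
  have hβne : β ≠ 0 := inv_ne_zero hne
  have hαval : α = c 0 + β⁻¹ := by
    rw [hβdef, inv_inv]; ring
  refine ⟨β, hβ, hαval, ?_⟩
  have hb2 : 2 ≤ |β| := ge_of_tendsto hβ.abs (Filter.Eventually.of_forall fun n => (hB n).2)
  have hb1 : |β - c 1| ≤ 1/2 :=
    le_of_tendsto (hβ.sub_const _).abs (Filter.Eventually.of_forall fun n => (hB n).1)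
  -- bounds for T c 2
  have hB2 := fun n => T_bounds c hc1 hc2 n 2 (by omega)
  have hc1i := hc1 1 le_rfl
  rcases lt_or_ge (|c 1|) 3 with h3 | h3
  · -- |c 1| = 2
    have hck2 : |c 1| = 2 := le_antisymm (by omega) hc1i
    have hsign := hc2 1 le_rfl hck2
    have hnext := hc1 2 (by omega)
    have hnext' := le_abs.mp hnext
    have hβ1 : Tendsto (fun n => T c 1 (n+1)) atTop (𝓝 β) :=
      (tendsto_add_atTop_iff_nat 1).mpr hβ
    simp only [T_succ] at hβ1
    rcases abs_eq (by norm_num : (0:ℤ) ≤ 2) |>.mp hck2 with hce | hce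
    · -- c 1 = 2, c 2 ≥ 2
      have hpos : 0 < c 2 := by
        rw [hce] at hsign
        exact Int.sign_eq_one_iff_pos.mp (hsign.symm.trans (by decide))
      have hc2r : (2:ℝ) ≤ (c 2 : ℝ) := by exact_mod_cast by omega
      have hbd : ∀ n, 2 + ((c 2 : ℝ) + 1/2)⁻¹ ≤ (c 1 : ℝ) + (T c (1+1) n)⁻¹ := by
        intro n
        have hb := abs_le.mp (hB2 n).1
        have htpos : (0:ℝ) < T c 2 n := by linarith
        have hle : T c 2 n ≤ (c 2 : ℝ) + 1/2 := by linarith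
        have : ((c 2 : ℝ) + 1/2)⁻¹ ≤ (T c 2 n)⁻¹ := inv_anti₀ htpos hle
        have hc1e : (c 1 : ℝ) = 2 := by exact_mod_cast hce
        rw [hc1e]
        show (2:ℝ) + ((c 2:ℝ) + 1/2)⁻¹ ≤ 2 + (T c 2 n)⁻¹
        linarith
      have hβlb : 2 + ((c 2 : ℝ) + 1/2)⁻¹ ≤ β :=
        ge_of_tendsto hβ1 (Filter.Eventually.of_forall hbd)
      have : (0:ℝ) < ((c 2 : ℝ) + 1/2)⁻¹ := by positivity
      have : 2 < β := by linarith
      calc 2 < β := this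
        _ ≤ |β| := le_abs_self β
    · -- c 1 = -2, c 2 ≤ -2
      have hneg : c 2 < 0 := by
        rw [hce] at hsign
        exact Int.sign_eq_neg_one_iff_neg.mp (hsign.symm.trans (by decide))
      have hc2r : (c 2 : ℝ) ≤ -2 := by
        have : c 2 ≤ -2 := by omega
        exact_mod_cast this
      have hbd : ∀ n, (c 1 : ℝ) + (T c (1+1) n)⁻¹ ≤ -2 + ((c 2 : ℝ) - 1/2)⁻¹ := by
        intro n
        have hb := abs_le.mp (hB2 n).1
        have htneg : T c 2 n < 0 := by linarith
        have hge : (c 2 : ℝ) - 1/2 ≤ T c 2 n := by linarith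
        have hinvle : (T c 2 n)⁻¹ ≤ ((c 2 : ℝ) - 1/2)⁻¹ := by
          have h1' : (0:ℝ) < -(T c 2 n) := by linarith
          have h2' : -(T c 2 n) ≤ -((c 2 : ℝ) - 1/2) := by linarith
          have := inv_anti₀ h1' h2'
          rw [inv_neg, inv_neg] at this
          linarith
        have hc1e : (c 1 : ℝ) = -2 := by exact_mod_cast hce
        rw [hc1e]
        show (-2:ℝ) + (T c 2 n)⁻¹ ≤ -2 + ((c 2:ℝ) - 1/2)⁻¹
        linarith
      have hβub : β ≤ -2 + ((c 2 : ℝ) - 1/2)⁻¹ :=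
        le_of_tendsto hβ1 (Filter.Eventually.of_forall hbd)
      have hneg2 : ((c 2 : ℝ) - 1/2)⁻¹ < 0 := inv_neg''.mpr (by linarith)
      have : β < -2 := by linarith
      calc 2 < -β := by linarith
        _ ≤ |β| := neg_le_abs β
  · -- |c 1| ≥ 3
    have h3r : (3:ℝ) ≤ |(c 1 : ℝ)| := by rw [← Int.cast_abs]; exact_mod_cast h3
    have h4 := abs_sub_abs_le_abs_sub (c 1 : ℝ) β
    rw [abs_sub_comm] at h4
    linarith

lemma head_eq (α : ℝ) (c d : ℕ → ℤ)
    (hc1 : ∀ i, 1 ≤ i → 2 ≤ |c i|)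
    (hc2 : ∀ i, 1 ≤ i → |c i| = 2 → (c i).sign = (c (i+1)).sign)
    (hd1 : ∀ i, 1 ≤ i → 2 ≤ |d i|)
    (hd2 : ∀ i, 1 ≤ i → |d i| = 2 → (d i).sign = (d (i+1)).sign)
    (hcα : Tendsto (fun n => T c 0 n) atTop (𝓝 α))
    (hdα : Tendsto (fun n => T d 0 n) atTop (𝓝 α)) : c 0 = d 0 := by
  obtain ⟨β, hβ, hαβ, hβ2⟩ := tail_lemma α c hc1 hc2 hcα
  obtain ⟨γ, hγ, hαγ, hγ2⟩ := tail_lemma α d hd1 hd2 hdα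
  have hβi : |β⁻¹| < 1/2 := by
    rw [abs_inv]
    rw [inv_lt_comm₀ (by linarith) (by norm_num)]
    linarith
  have hγi : |γ⁻¹| < 1/2 := by
    rw [abs_inv]
    rw [inv_lt_comm₀ (by linarith) (by norm_num)]
    linarith
  have hdiff : ((c 0 : ℝ) - d 0) = γ⁻¹ - β⁻¹ := by
    have := hαβ.symm.trans hαγ
    linarith
  have : |(c 0 : ℝ) - d 0| < 1 := by
    rw [hdiff]
    calc |γ⁻¹ - β⁻¹| ≤ |γ⁻¹| + |β⁻¹| := abs_sub _ _
      _ < 1 := by linarith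
  have : |c 0 - d 0| < 1 := by
    have h' : |((c 0 - d 0 : ℤ) : ℝ)| < 1 := by push_cast; convert this using 2
    rw [← Int.cast_abs] at h'
    exact_mod_cast h'
  have := abs_lt.mp this
  omega


theorem stmt1 (α : ℝ) (c d : ℕ → ℤ)
    (hc1 : ∀ i, 1 ≤ i → 2 ≤ |c i|)
    (hc2 : ∀ i, 1 ≤ i → |c i| = 2 → (c i).sign = (c (i+1)).sign)
    (hd1 : ∀ i, 1 ≤ i → 2 ≤ |d i|)
    (hd2 : ∀ i, 1 ≤ i → |d i| = 2 → (d i).sign = (d (i+1)).sign)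
    (hcα : Tendsto (fun n => cfL (List.ofFn fun i : Fin (n+1) => c i)) atTop (nhds α))
    (hdα : Tendsto (fun n => cfL (List.ofFn fun i : Fin (n+1) => d i)) atTop (nhds α)) :
    c = d := by
  have key : ∀ (n : ℕ) (α : ℝ) (c d : ℕ → ℤ),
      (∀ i, 1 ≤ i → 2 ≤ |c i|) →
      (∀ i, 1 ≤ i → |c i| = 2 → (c i).sign = (c (i+1)).sign) →
      (∀ i, 1 ≤ i → 2 ≤ |d i|) →
      (∀ i, 1 ≤ i → |d i| = 2 → (d i).sign = (d (i+1)).sign) →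
      Tendsto (fun m => T c 0 m) atTop (𝓝 α) →
      Tendsto (fun m => T d 0 m) atTop (𝓝 α) → c n = d n := by
    intro n
    induction n with
    | zero =>
      intro α c d hc1 hc2 hd1 hd2 hcα hdα
      exact head_eq α c d hc1 hc2 hd1 hd2 hcα hdα
    | succ n ih =>
      intro α c d hc1 hc2 hd1 hd2 hcα hdα
      obtain ⟨β, hβ, hαβ, hβ2⟩ := tail_lemma α c hc1 hc2 hcα
      obtain ⟨γ, hγ, hαγ, hγ2⟩ := tail_lemma α d hd1 hd2 hdα
      have h00 : c 0 = d 0 := head_eq α c d hc1 hc2 hd1 hd2 hcα hdα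
      have hβγ : β = γ := by
        have hβne : β ≠ 0 := by intro h; rw [h] at hβ2; norm_num at hβ2
        have hγne : γ ≠ 0 := by intro h; rw [h] at hγ2; norm_num at hγ2
        have : β⁻¹ = γ⁻¹ := by
          rw [h00] at hαβ
          linarith [hαβ.symm.trans hαγ]
        exact inv_injective this
      have := ih β (fun i => c (i+1)) (fun i => d (i+1))
        (fun i _ => hc1 (i+1) (by omega))
        (fun i _ => hc2 (i+1) (by omega))
        (fun i _ => hd1 (i+1) (by omega))
        (fun i _ => hd2 (i+1) (by omega))
        (by simpa only [T_shift] using hβ)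
        (by simpa only [T_shift] using hβγ ▸ hγ)
      simpa using this
  have hc' : Tendsto (fun m => T c 0 m) atTop (𝓝 α) := by
    simpa only [T, zero_add] using hcα
  have hd' : Tendsto (fun m => T d 0 m) atTop (𝓝 α) := by
    simpa only [T, zero_add] using hdα
  funext n
  exact key n α c d hc1 hc2 hd1 hd2 hc' hd'
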